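/- Let Θ ⊆ ℝ^p be a nonempty set, let 0 < δ < 1 ≤ D < ∞, and let g, h : ℝ^p → ℝ be differentiable with g(θ), h(θ) ∈ [δ, D] for all θ ∈ Θ and with sup_{θ∈Θ}‖∇g‖ and sup_{θ∈Θ}‖∇h‖ finite. Set C₁(h) := (1 + sup_{θ∈Θ}‖∇h(θ)‖)/δ². Then sup_{θ∈Θ} ‖∇(log∘g)(θ) − ∇(log∘h)(θ)‖ ≤ C₁(h) · ( sup_{θ∈Θ}|g(θ) − h(θ)| + sup_{θ∈Θ}‖∇g(θ) − ∇h(θ)‖ ), provided the suprema of |g − h| and ‖∇g − ∇h‖ over Θ are finite. -/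

import Mathlib

open InnerProductSpace

lemma grad_log {p : ℕ} (g : EuclideanSpace ℝ (Fin p) → ℝ) (hgd : Differentiable ℝ g)
    (θ : EuclideanSpace ℝ (Fin p)) (hθ : g θ ≠ 0) :
    gradient (fun x => Real.log (g x)) θ = (g θ)⁻¹ • gradient g θ := by
  have h1 : HasFDerivAt g (toDual ℝ _ (gradient g θ)) θ :=
    ((hgd θ).hasGradientAt).hasFDerivAt
  have h3 : HasGradientAt (fun x => Real.log (g x)) ((g θ)⁻¹ • gradient g θ) θ := by
    rw [hasGradientAt_iff_hasFDerivAt, map_smul]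
    exact h1.log hθ
  exact h3.gradient



/-- Corollary 16(ii) of the paper: with `C₁(h) = (1 + sup_θ‖∇h‖)/δ²`,
`sup_θ ‖∇(log∘g) - ∇(log∘h)‖ ≤ C₁(h) (sup_θ|g-h| + sup_θ‖∇g-∇h‖)`. -/
theorem stmt_15 {p : ℕ} (Θ : Set (EuclideanSpace ℝ (Fin p))) (hΘ : Θ.Nonempty)
    (δ D : ℝ) (hδ : 0 < δ) (hδ1 : δ < 1) (hD : 1 ≤ D)
    (g h : EuclideanSpace ℝ (Fin p) → ℝ)
    (hgd : Differentiable ℝ g) (hhd : Differentiable ℝ h)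
    (hgmem : ∀ θ ∈ Θ, g θ ∈ Set.Icc δ D) (hhmem : ∀ θ ∈ Θ, h θ ∈ Set.Icc δ D)
    (hbgg : BddAbove ((fun θ => ‖gradient g θ‖) '' Θ))
    (hbgh : BddAbove ((fun θ => ‖gradient h θ‖) '' Θ))
    (hb0 : BddAbove ((fun θ => |g θ - h θ|) '' Θ))
    (hb1 : BddAbove ((fun θ => ‖gradient g θ - gradient h θ‖) '' Θ)) :
    sSup ((fun θ => ‖gradient (fun x => Real.log (g x)) θ -
        gradient (fun x => Real.log (h x)) θ‖) '' Θ) ≤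
      ((1 + sSup ((fun θ => ‖gradient h θ‖) '' Θ)) / δ ^ 2) *
        (sSup ((fun θ => |g θ - h θ|) '' Θ) +
          sSup ((fun θ => ‖gradient g θ - gradient h θ‖) '' Θ)) := by
  obtain ⟨θ0, hθ0⟩ := hΘ
  set M := sSup ((fun θ => ‖gradient h θ‖) '' Θ) with hMdef
  set S0 := sSup ((fun θ => |g θ - h θ|) '' Θ) with hS0def
  set S1 := sSup ((fun θ => ‖gradient g θ - gradient h θ‖) '' Θ) with hS1def
  have hM : ∀ θ ∈ Θ, ‖gradient h θ‖ ≤ M := fun θ hθ => le_csSup hbgh ⟨θ, hθ, rfl⟩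
  have hS0 : ∀ θ ∈ Θ, |g θ - h θ| ≤ S0 := fun θ hθ => le_csSup hb0 ⟨θ, hθ, rfl⟩
  have hS1 : ∀ θ ∈ Θ, ‖gradient g θ - gradient h θ‖ ≤ S1 :=
    fun θ hθ => le_csSup hb1 ⟨θ, hθ, rfl⟩
  have hM0 : 0 ≤ M := le_trans (norm_nonneg _) (hM θ0 hθ0)
  have hS00 : 0 ≤ S0 := le_trans (abs_nonneg _) (hS0 θ0 hθ0)
  have hS10 : 0 ≤ S1 := le_trans (norm_nonneg _) (hS1 θ0 hθ0)
  apply csSup_le (Set.Nonempty.image _ ⟨θ0, hθ0⟩)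
  rintro _ ⟨θ, hθ, rfl⟩
  beta_reduce
  have hgδ : δ ≤ g θ := (hgmem θ hθ).1
  have hhδ : δ ≤ h θ := (hhmem θ hθ).1
  have hgpos : 0 < g θ := lt_of_lt_of_le hδ hgδ
  have hhpos : 0 < h θ := lt_of_lt_of_le hδ hhδ
  rw [grad_log g hgd θ hgpos.ne', grad_log h hhd θ hhpos.ne']
  have key : (g θ)⁻¹ • gradient g θ - (h θ)⁻¹ • gradient h θ =
      (g θ)⁻¹ • (gradient g θ - gradient h θ) + ((g θ)⁻¹ - (h θ)⁻¹) • gradient h θ := by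
    module
  rw [key]
  have h1 : ‖(g θ)⁻¹ • (gradient g θ - gradient h θ)‖ ≤ (1 / δ ^ 2) * S1 := by
    rw [norm_smul]
    have : ‖(g θ)⁻¹‖ ≤ 1 / δ ^ 2 := by
      rw [Real.norm_eq_abs, abs_of_pos (inv_pos.mpr hgpos)]
      rw [inv_le_comm₀ hgpos (by positivity), one_div, inv_inv]
      nlinarith
    exact mul_le_mul this (hS1 θ hθ) (norm_nonneg _) (by positivity)
  have h2 : ‖((g θ)⁻¹ - (h θ)⁻¹) • gradient h θ‖ ≤ (S0 / δ ^ 2) * M := by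
    rw [norm_smul]
    have habs : ‖(g θ)⁻¹ - (h θ)⁻¹‖ ≤ S0 / δ ^ 2 := by
      rw [Real.norm_eq_abs]
      have : (g θ)⁻¹ - (h θ)⁻¹ = (h θ - g θ) / (g θ * h θ) := by
        field_simp
      rw [this, abs_div, abs_of_pos (mul_pos hgpos hhpos)]
      rw [div_le_div_iff₀ (mul_pos hgpos hhpos) (by positivity)]
      have h3 : |h θ - g θ| ≤ S0 := by rw [abs_sub_comm]; exact hS0 θ hθ
      have hδ2 : δ ^ 2 ≤ g θ * h θ := by nlinarith
      exact mul_le_mul h3 hδ2 (by positivity) hS00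
    exact mul_le_mul habs (hM θ hθ) (norm_nonneg _) (by positivity)
  calc ‖_ + _‖ ≤ (1 / δ ^ 2) * S1 + (S0 / δ ^ 2) * M :=
        le_trans (norm_add_le _ _) (add_le_add h1 h2)
    _ ≤ ((1 + M) / δ ^ 2) * (S0 + S1) := by
        rw [div_mul_eq_mul_div, div_mul_eq_mul_div, div_mul_eq_mul_div,
          ← add_div, div_le_div_iff₀ (by positivity) (by positivity)]
        nlinarith [mul_nonneg (mul_nonneg hM0 hS10) (sq_nonneg δ), mul_nonneg hS00 (sq_nonneg δ)]
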